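/- The semi-join R(t̄) ⋉ T(v̄) semantics is correct: for a guard fact f conforming to R(t̄) with join key z̄ (the variables common to t̄ and v̄), there exists a conditional fact g conforming to T(v̄) with π_{v̄;z̄}(g) = π_{t̄;z̄}(f) if and only if there is a substitution σ with σ(t̄) equal to the tuple of f and T(σ(v̄')) in the database for some extension σ' of σ to the variables of v̄. -/
import Mathlib


/-- A tuple of data values conforms to a vector of terms (terms are data
values `Sum.inl d` or variables `Sum.inr x`). -/
def Conforms {D V : Type*} {n : ℕ} (a : Fin n → D) (t : Fin n → D ⊕ V) : Prop :=
  (∀ i j, t i = t j → a i = a j) ∧ (∀ i (d : D), t i = Sum.inl d → d = a i)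

/-- Applying a substitution to a term. -/
def applySubst {D V : Type*} (σ : V → D) : D ⊕ V → D :=
  Sum.elim id σ

/-- Correctness of the semi-join `R(t̄) ⋉ T(v̄)` semantics: for a guard fact
`f` conforming to `R(t̄)`, there is a conditional fact `g ∈ T` conforming to
`T(v̄)` agreeing with `f` on the join key (the variables shared by `t̄` and
`v̄`) iff there is a substitution `σ` with `σ(t̄) = f` and an extension `σ'`
of `σ` (agreeing with `σ` on the variables of `t̄`) with `σ'(v̄) ∈ T`. -/
theorem semijoin_semantics_correct {D V : Type*} [Nonempty D] {m p : ℕ}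
    (t : Fin m → D ⊕ V) (v : Fin p → D ⊕ V)
    (Tfacts : Set (Fin p → D))
    (f : Fin m → D) (hf : Conforms f t) :
    (∃ g ∈ Tfacts, Conforms g v ∧
        ∀ (i : Fin m) (j : Fin p) (x : V),
          t i = Sum.inr x → v j = Sum.inr x → f i = g j) ↔
    (∃ σ : V → D, (fun i => applySubst σ (t i)) = f ∧
        ∃ σ' : V → D,
          (∀ x : V, (∃ i, t i = Sum.inr x) → σ' x = σ x) ∧
          (fun j => applySubst σ' (v j)) ∈ Tfacts) := by
  classical
  constructor
  · rintro ⟨g, hg, hgv, hagree⟩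
    set σ : V → D := fun x =>
      if h : ∃ i, t i = Sum.inr x then f h.choose else Classical.arbitrary D with hσ
    have hσt : ∀ i x, t i = Sum.inr x → σ x = f i := by
      intro i x hix
      have h : ∃ i, t i = Sum.inr x := ⟨i, hix⟩
      simp only [hσ, dif_pos h]
      exact hf.1 _ _ (h.choose_spec.trans hix.symm)
    set σ' : V → D := fun x =>
      if h : ∃ j, v j = Sum.inr x then g h.choose else σ x with hσ'
    have hσ'v : ∀ j x, v j = Sum.inr x → σ' x = g j := by
      intro j x hjx
      have h : ∃ j, v j = Sum.inr x := ⟨j, hjx⟩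
      simp only [hσ', dif_pos h]
      exact hgv.1 _ _ (h.choose_spec.trans hjx.symm)
    refine ⟨σ, ?_, σ', ?_, ?_⟩
    · funext i
      cases hti : t i with
      | inl d => simp [applySubst, hf.2 i d hti]
      | inr x => simpa [applySubst] using hσt i x hti
    · rintro x ⟨i, hix⟩
      by_cases h : ∃ j, v j = Sum.inr x
      · rw [hσ'v h.choose x h.choose_spec, hσt i x hix]
        exact (hagree i h.choose x hix h.choose_spec).symm
      · simp [hσ', dif_neg h]
    · have : (fun j => applySubst σ' (v j)) = g := by
        funext j
        cases hvj : v j with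
        | inl d => simp [applySubst, hgv.2 j d hvj]
        | inr x => simpa [applySubst] using hσ'v j x hvj
      rwa [this]
  · rintro ⟨σ, hσf, σ', hext, hT⟩
    refine ⟨fun j => applySubst σ' (v j), hT, ⟨?_, ?_⟩, ?_⟩
    · intro i j hij; simp [hij]
    · intro j d hjd; simp [hjd, applySubst]
    · intro i j x hix hjx
      have : f i = σ x := by rw [← hσf]; simp [hix, applySubst]
      rw [this]
      simp [applySubst, hjx, hext x ⟨i, hix⟩]
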